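/- Reversal of a terminating double sum: for nonnegative integers k and ℓ, F2(a; -k, -ℓ; -2k, -2ℓ; x, y) = (k! ℓ! (a)_{k+ℓ} / ((2k)! (2ℓ)!)) x^k y^ℓ F3(k+1, ℓ+1; -k, -ℓ; 1-a-k-ℓ; 1/x, 1/y), where both sides are finite sums (polynomials in x, y times the indicated monomial), valid for all nonzero x, y. -/

import Mathlib

noncomputable def poch (a : ℂ) (n : ℕ) : ℂ := (ascPochhammer ℂ n).eval a

noncomputable def hpg21 (A B C z : ℂ) : ℂ :=
  ∑' n : ℕ, poch A n * poch B n / (poch C n * (n.factorial : ℂ)) * z ^ n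

noncomputable def F2fin (a : ℂ) (k l : ℕ) (x y : ℂ) : ℂ :=
  ∑ n ∈ Finset.range (k + 1), ∑ m ∈ Finset.range (l + 1),
    poch a (n + m) * poch (-(k : ℂ)) n * poch (-(l : ℂ)) m /
      (poch (-(2 * (k : ℂ))) n * poch (-(2 * (l : ℂ))) m *
        (n.factorial : ℂ) * (m.factorial : ℂ)) * x ^ n * y ^ m

noncomputable def F3fin (a : ℂ) (k l : ℕ) (x y : ℂ) : ℂ :=
  ∑ n ∈ Finset.range (k + 1), ∑ m ∈ Finset.range (l + 1),
    poch ((k : ℂ) + 1) n * poch ((l : ℂ) + 1) m * poch (-(k : ℂ)) n * poch (-(l : ℂ)) m /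
      (poch (1 - a - (k : ℂ) - (l : ℂ)) (n + m) * (n.factorial : ℂ) * (m.factorial : ℂ)) *
      x ^ n * y ^ m



lemma poch_zero (a : ℂ) : poch a 0 = 1 := by simp [poch]

lemma poch_succ (a : ℂ) (n : ℕ) : poch a (n + 1) = poch a n * (a + n) := by
  simp [poch, ascPochhammer_succ_eval]

lemma poch_add (a : ℂ) (t r : ℕ) : poch a (t + r) = poch a t * poch (a + t) r := by
  induction r with
  | zero => simp [poch_zero]
  | succ r ih =>
      rw [← Nat.add_assoc, poch_succ, ih, poch_succ]
      push_cast
      ring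

lemma poch_prod (a : ℂ) (n : ℕ) : poch a n = ∏ j ∈ Finset.range n, (a + j) := by
  induction n with
  | zero => simp [poch_zero]
  | succ n ih => rw [poch_succ, ih, Finset.prod_range_succ]

lemma poch_ne_zero (a : ℂ) (ha : ∀ m : ℤ, a ≠ (m : ℂ)) (n : ℕ) : poch a n ≠ 0 := by
  rw [poch_prod]
  refine Finset.prod_ne_zero_iff.mpr fun j _ h => ?_
  have hj := eq_neg_of_add_eq_zero_left h
  exact ha (-(j : ℤ)) (by push_cast; exact hj)

lemma poch_reflect (c : ℂ) (r : ℕ) :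
    poch (1 - c - r) r = (-1) ^ r * poch c r := by
  rw [poch_prod, poch_prod, ← Finset.prod_range_reflect]
  rw [show ((-1 : ℂ)) ^ r = ∏ _j ∈ Finset.range r, (-1 : ℂ) by simp, ← Finset.prod_mul_distrib]
  refine Finset.prod_congr rfl fun j hj => ?_
  have hj' : j < r := Finset.mem_range.mp hj
  have : ((r - 1 - j : ℕ) : ℂ) = (r : ℂ) - 1 - j := by
    have h : r - 1 - j = r - (1 + j) := by omega
    rw [h]
    push_cast [Nat.cast_sub (by omega : 1 + j ≤ r)]
    ring
  rw [this]
  ring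

lemma fact_ne_zero' (n : ℕ) : (n.factorial : ℂ) ≠ 0 :=
  Nat.cast_ne_zero.mpr (Nat.factorial_ne_zero _)

lemma poch_neg_nat_mul (K n : ℕ) (h : n ≤ K) :
    poch (-(K : ℂ)) n * ((K - n).factorial : ℂ) = (-1) ^ n * (K.factorial : ℂ) := by
  induction n with
  | zero => simp [poch_zero]
  | succ n ih =>
      have hn : n ≤ K := by omega
      have h1 : K - n = (K - (n + 1)) + 1 := by omega
      have h2 : ((K - n).factorial : ℂ) = ((K - n : ℕ) : ℂ) * ((K - (n+1)).factorial : ℂ) := by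
        rw [h1, Nat.factorial_succ]; push_cast; ring
      have h3 : (-(K:ℂ) + n) = -(((K - n : ℕ)) : ℂ) := by push_cast [Nat.cast_sub hn]; ring
      have ih' := ih hn
      rw [h2] at ih'
      rw [poch_succ, h3]
      calc poch (-(K:ℂ)) n * -(((K - n : ℕ)) : ℂ) * ((K-(n+1)).factorial : ℂ)
          = -(poch (-(K:ℂ)) n * (((K - n : ℕ)) * ((K-(n+1)).factorial : ℂ))) := by ring
        _ = -((-1)^n * (K.factorial : ℂ)) := by rw [ih']
        _ = (-1)^(n+1) * (K.factorial : ℂ) := by ring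

lemma poch_neg_nat (K n : ℕ) (h : n ≤ K) :
    poch (-(K : ℂ)) n = (-1) ^ n * (K.factorial : ℂ) / ((K - n).factorial : ℂ) := by
  rw [eq_div_iff (fact_ne_zero' _), poch_neg_nat_mul K n h]

lemma poch_nat_succ (K i : ℕ) :
    poch ((K : ℂ) + 1) i = ((K + i).factorial : ℂ) / (K.factorial : ℂ) := by
  induction i with
  | zero => simp [poch_zero, Nat.factorial_ne_zero]
  | succ i ih =>
      rw [poch_succ, ih]
      have h6 : ((K + (i+1)).factorial : ℂ) = ((K + i + 1 : ℕ) : ℂ) * ((K + i).factorial : ℂ) := by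
        rw [show K + (i+1) = (K + i) + 1 by ring, Nat.factorial_succ]; push_cast; ring
      rw [h6]
      have h5 : (K.factorial : ℂ) ≠ 0 := fact_ne_zero' _
      field_simp
      push_cast
      ring

set_option maxHeartbeats 2000000 in
lemma term_eq (a : ℂ) (ha : ∀ m : ℤ, a ≠ (m : ℂ)) (x y : ℂ) (hx : x ≠ 0) (hy : y ≠ 0)
    (n i m j : ℕ) :
    poch a (n + m) * poch (-(((n+i : ℕ)) : ℂ)) n * poch (-(((m+j : ℕ)) : ℂ)) m /
      (poch (-(2 * ((n+i : ℕ) : ℂ))) n * poch (-(2 * ((m+j : ℕ) : ℂ))) m *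
        (n.factorial : ℂ) * (m.factorial : ℂ)) * x ^ n * y ^ m
    = ((n+i).factorial : ℂ) * ((m+j).factorial : ℂ) * poch a ((n+i) + (m+j)) /
        (((2*(n+i)).factorial : ℂ) * ((2*(m+j)).factorial : ℂ)) * x ^ (n+i) * y ^ (m+j) *
      (poch (((n+i : ℕ) : ℂ) + 1) i * poch (((m+j : ℕ) : ℂ) + 1) j *
        poch (-(((n+i : ℕ)) : ℂ)) i * poch (-(((m+j : ℕ)) : ℂ)) j /
        (poch (1 - a - ((n+i : ℕ) : ℂ) - ((m+j : ℕ) : ℂ)) (i + j) *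
          (i.factorial : ℂ) * (j.factorial : ℂ)) * (1/x) ^ i * (1/y) ^ j) := by
  have ha' : ∀ mm : ℤ, a + ((n + m : ℕ) : ℂ) ≠ (mm : ℂ) := by
    intro mm h
    push_cast at h
    exact ha (mm - (n + m)) (by push_cast; linear_combination h)
  have hpz : poch (a + ((n + m : ℕ) : ℂ)) (i + j) ≠ 0 := poch_ne_zero _ ha' _
  -- rewrite all pochhammers
  rw [show (-(2 * ((n+i : ℕ) : ℂ))) = -(((2*(n+i) : ℕ)) : ℂ) by push_cast; ring,
      show (-(2 * ((m+j : ℕ) : ℂ))) = -(((2*(m+j) : ℕ)) : ℂ) by push_cast; ring,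
      show (1 - a - ((n+i : ℕ) : ℂ) - ((m+j : ℕ) : ℂ))
          = 1 - (a + ((n + m : ℕ) : ℂ)) - ((i + j : ℕ) : ℂ) by push_cast; ring,
      poch_reflect,
      show poch a ((n+i) + (m+j)) = poch a (n+m) * poch (a + ((n + m : ℕ) : ℂ)) (i+j) by
        rw [show (n+i) + (m+j) = (n+m) + (i+j) by ring, poch_add],
      poch_neg_nat (n+i) n (by omega), poch_neg_nat (m+j) m (by omega),
      poch_neg_nat (2*(n+i)) n (by omega), poch_neg_nat (2*(m+j)) m (by omega),
      poch_neg_nat (n+i) i (by omega), poch_neg_nat (m+j) j (by omega),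
      poch_nat_succ, poch_nat_succ,
      show (n+i) - n = i by omega, show (m+j) - m = j by omega,
      show 2*(n+i) - n = n + 2*i by omega, show 2*(m+j) - m = m + 2*j by omega,
      show (n+i) - i = n by omega, show (m+j) - j = m by omega,
      show (n+i) + i = n + 2*i by ring, show (m+j) + j = m + 2*j by ring]
  have hpz2 := hpz
  push_cast at hpz2
  have hpz3 : poch (a + (n : ℂ) + (m : ℂ)) (i + j) ≠ 0 := by rwa [add_assoc]
  field_simp [fact_ne_zero', hpz, hpz2, hpz3, hx, hy]
  have hneg : (-1 : ℂ) ≠ 0 := by norm_num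
  rw [div_eq_div_iff
    (by apply_rules [mul_ne_zero, pow_ne_zero, fact_ne_zero', hpz2, hx, hy])
    (by apply_rules [mul_ne_zero, pow_ne_zero, fact_ne_zero', hpz2, hx, hy])]
  rw [one_div_pow, one_div_pow]
  field_simp
  ring

theorem F2_F3_reversal (a : ℂ) (k l : ℕ) (ha : ∀ m : ℤ, a ≠ (m : ℂ))
    (x y : ℂ) (hx : x ≠ 0) (hy : y ≠ 0) :
    F2fin a k l x y =
      (k.factorial : ℂ) * (l.factorial : ℂ) * poch a (k + l) /
          (((2 * k).factorial : ℂ) * ((2 * l).factorial : ℂ)) *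
        x ^ k * y ^ l * F3fin a k l (1 / x) (1 / y) := by
  unfold F2fin F3fin
  simp only [Finset.mul_sum]
  conv_rhs => rw [← Finset.sum_range_reflect]
  refine Finset.sum_congr rfl fun n hn => ?_
  conv_rhs => rw [← Finset.sum_range_reflect]
  refine Finset.sum_congr rfl fun m hm => ?_
  have hnk : n ≤ k := Nat.lt_succ_iff.mp (Finset.mem_range.mp hn)
  have hml : m ≤ l := Nat.lt_succ_iff.mp (Finset.mem_range.mp hm)
  obtain ⟨i, rfl⟩ : ∃ i, k = n + i := ⟨k - n, by omega⟩
  obtain ⟨j, rfl⟩ : ∃ j, l = m + j := ⟨l - m, by omega⟩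
  rw [show n + i + 1 - 1 - n = i by omega, show m + j + 1 - 1 - m = j by omega]
  exact term_eq a ha x y hx hy n i m j
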